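/- Let 0 < δ ≤ 1/4, let G be a graph, let μ be a probability measure on V(G), and let (T, β) be a tree decomposition of G. Then either there is an anti-adjacent pair (P, Q) of disjoint vertex sets in G with μ(P) > δ and μ(Q) > δ, or there is a node t of T whose bag satisfies μ(β(t)) ≥ 1/2 − δ. -/

import Mathlib

set_option linter.unusedSectionVars false
namespace StmtAux
open SimpleGraph

variable {ι : Type*} [DecidableEq ι] {T : SimpleGraph ι}

/-- `Reach T t x y`: there is a walk from `x` to `y` in `T` avoiding vertex `t`. -/
def Reach (T : SimpleGraph ι) (t x y : ι) : Prop := ∃ p : T.Walk x y, t ∉ p.support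

lemma Reach.ne_left {t x y : ι} (h : Reach T t x y) : x ≠ t := by
  obtain ⟨p, hp⟩ := h; rintro rfl; exact hp p.start_mem_support

lemma Reach.ne_right {t x y : ι} (h : Reach T t x y) : y ≠ t := by
  obtain ⟨p, hp⟩ := h; rintro rfl; exact hp p.end_mem_support

lemma reach_refl {t x : ι} (h : x ≠ t) : Reach T t x x :=
  ⟨Walk.nil, by simpa using Ne.symm h⟩

lemma Reach.symm {t x y : ι} (h : Reach T t x y) : Reach T t y x := by
  obtain ⟨p, hp⟩ := h
  exact ⟨p.reverse, by simpa [Walk.support_reverse] using hp⟩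

lemma Reach.trans {t x y z : ι} (h : Reach T t x y) (h' : Reach T t y z) :
    Reach T t x z := by
  obtain ⟨p, hp⟩ := h; obtain ⟨q, hq⟩ := h'
  refine ⟨p.append q, ?_⟩
  rw [Walk.support_append, List.mem_append]
  rintro (h1 | h2)
  · exact hp h1
  · exact hq (List.mem_of_mem_tail h2)

lemma not_reach_both (hT : T.IsTree) {t t' x : ι} (h : T.Adj t t')
    (h1 : Reach T t t' x) (h2 : Reach T t' t x) : False := by
  obtain ⟨p, hp⟩ := h1
  obtain ⟨q, hq⟩ := h2
  have hpath := hT.2.path_unique (q.append p.reverse).toPath (Path.singleton h)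
  have hedge : s(t, t') ∈ ((q.append p.reverse).toPath : T.Walk t t').edges := by
    rw [hpath]; exact Path.mk'_mem_edges_singleton h
  have hmem := Walk.edges_toPath_subset _ hedge
  rw [Walk.edges_append, List.mem_append] at hmem
  rcases hmem with h' | h'
  · exact hq (Walk.snd_mem_support_of_mem_edges q h')
  · rw [Walk.edges_reverse, List.mem_reverse] at h'
    exact hp (Walk.fst_mem_support_of_mem_edges p h')

lemma reach_dichotomy (hT : T.IsTree) {t t' x : ι} (h : T.Adj t t') (hx : x ≠ t) :
    Reach T t t' x ∨ Reach T t' t x := by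
  obtain ⟨w⟩ := hT.1 t x
  by_cases ht' : t' ∈ (w.toPath : T.Walk t x).support
  · left
    refine ⟨(w.toPath : T.Walk t x).dropUntil t' ht', ?_⟩
    intro hts
    have hnd : (w.toPath : T.Walk t x).support.Nodup := w.toPath.2.support_nodup
    rw [← Walk.take_spec (w.toPath : T.Walk t x) ht', Walk.support_append] at hnd
    have htt : t ∈ ((w.toPath : T.Walk t x).takeUntil t' ht').support :=
      Walk.start_mem_support _
    have htd : t ∈ ((w.toPath : T.Walk t x).dropUntil t' ht').support.tail := by
      have := Walk.support_eq_cons ((w.toPath : T.Walk t x).dropUntil t' ht')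
      rw [this] at hts
      rcases hts with _ | hts
      · exact absurd rfl h.ne
      · assumption
  -- contradiction: t appears in both halves of a nodup list
    exact (List.disjoint_of_nodup_append hnd) htt htd
  · right; exact ⟨w.toPath, ht'⟩

lemma dist_lt (hT : T.IsTree) {t t' x : ι} (h : T.Adj t t') (hr : Reach T t t' x) :
    T.dist t' x < T.dist t x := by
  have hx : x ≠ t := hr.ne_right
  obtain ⟨w, hw⟩ := hT.1.exists_walk_length_eq_dist t x
  obtain ⟨p, hpath, hlen⟩ : ∃ p : T.Walk t x, p.IsPath ∧ p.length ≤ T.dist t x :=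
    ⟨w.bypass, w.bypass_isPath, hw ▸ w.length_bypass_le⟩
  cases p with
  | nil => exact absurd rfl hx.symm
  | @cons _ v _ h' p' =>
    have htp' : t ∉ p'.support := by
      have := hpath.support_nodup
      rw [Walk.support_cons] at this
      exact (List.nodup_cons.mp this).1
    by_cases hv : v = t'
    · have h1 : T.dist v x ≤ p'.length := SimpleGraph.dist_le p'
      have h2 : p'.length + 1 ≤ T.dist t x := by
        simpa [Walk.length_cons] using hlen
      rw [← hv]
      omega
    · exfalso
      have h1 : Reach T t v x := ⟨p', htp'⟩
      have h2 : Reach T t t' v := hr.trans h1.symm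
      have h3 : Reach T t' t v := by
        refine ⟨Walk.cons h' Walk.nil, ?_⟩
        simp only [Walk.support_cons, Walk.support_nil, List.mem_cons,
          List.mem_singleton, List.not_mem_nil]
        push_neg
        exact ⟨h.ne', fun e => hv e.symm, by simp⟩
      exact not_reach_both hT h h2 h3

lemma induce_walk {s : Set ι} {a b : {x // x ∈ s}} (q : (T.induce s).Walk a b) :
    ∃ p : T.Walk a.1 b.1, ∀ z ∈ p.support, z ∈ s := by
  induction q with
  | nil => exact ⟨Walk.nil, by rintro z hz; simp at hz; subst hz; exact Subtype.coe_prop _⟩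
  | cons h q ih =>
    obtain ⟨p, hp⟩ := ih
    refine ⟨Walk.cons h p, ?_⟩
    intro z hz
    replace hz := List.mem_cons.mp hz
    rcases hz with rfl | hz
    · exact Subtype.coe_prop _
    · exact hp z hz


section Measure

variable {V : Type*} [Fintype V]

/-- The "class" of vertex `v` relative to node `t`: vertices `w` not in bag `t`
whose bag-subtree can be reached from `v`'s bag-subtree avoiding `t`. -/
noncomputable def CC (T : SimpleGraph ι) (β : ι → Finset V) (t : ι) (v : V) : Finset V :=
  @Finset.filter V (fun w => w ∉ β t ∧ ∃ x y, v ∈ β x ∧ w ∈ β y ∧ Reach T t x y)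
    (Classical.decPred _) Finset.univ

lemma mem_CC {T : SimpleGraph ι} {β : ι → Finset V} {t : ι} {v w : V} :
    w ∈ CC T β t v ↔ w ∉ β t ∧ ∃ x y, v ∈ β x ∧ w ∈ β y ∧ Reach T t x y := by
  simp [CC]

/-- Vertices on the `t'` side of node `t`. -/
noncomputable def XX (T : SimpleGraph ι) (β : ι → Finset V) (t t' : ι) : Finset V :=
  @Finset.filter V (fun v => v ∉ β t ∧ ∃ x, v ∈ β x ∧ Reach T t t' x)
    (Classical.decPred _) Finset.univ

lemma mem_XX {T : SimpleGraph ι} {β : ι → Finset V} {t t' : ι} {v : V} :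
    v ∈ XX T β t t' ↔ v ∉ β t ∧ ∃ x, v ∈ β x ∧ Reach T t t' x := by
  simp [XX]

lemma reach_of_bags {T : SimpleGraph ι} {β : ι → Finset V}
    (hsub : ∀ v : V, (T.induce {t | v ∈ β t}).Connected)
    {v : V} {t x y : ι} (hv : v ∉ β t) (hx : v ∈ β x) (hy : v ∈ β y) :
    Reach T t x y := by
  obtain ⟨q⟩ := (hsub v).preconnected ⟨x, hx⟩ ⟨y, hy⟩
  obtain ⟨p, hp⟩ := induce_walk q
  exact ⟨p, fun ht => hv (hp t ht)⟩

lemma two_sums_le_one {μ : V → ℝ} (hμ0 : ∀ v, 0 ≤ μ v) (hμ1 : ∑ v, μ v = 1)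
    {S₁ S₂ : Finset V} (hd : Disjoint S₁ S₂) :
    ∑ v ∈ S₁, μ v + ∑ v ∈ S₂, μ v ≤ 1 := by
  classical
  have h1 : ∑ v ∈ S₁ ∪ S₂, μ v ≤ ∑ v, μ v :=
    Finset.sum_le_sum_of_subset_of_nonneg (Finset.subset_univ _) (fun i _ _ => hμ0 i)
  rw [Finset.sum_union hd] at h1
  linarith

lemma nonempty_of_sum_pos {μ : V → ℝ} {S : Finset V} (h : 0 < ∑ v ∈ S, μ v) :
    S.Nonempty := by
  rcases Finset.eq_empty_or_nonempty S with rfl | hS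
  · simp at h
  · exact hS

lemma exists_good (μ : V → ℝ) (hμ0 : ∀ v, 0 ≤ μ v) (hμ1 : ∑ v, μ v = 1)
    (T : SimpleGraph ι) (β : ι → Finset V) (hT : T.IsTree)
    (hbag : ∀ v : V, ∃ t, v ∈ β t)
    (hsub : ∀ v : V, (T.induce {t | v ∈ β t}).Connected) :
    ∃ t : ι, ∀ v, v ∉ β t → ∑ w ∈ CC T β t v, μ w ≤ 1 / 2 := by
  by_contra hbad
  push_neg at hbad
  choose wit hwit1 hwit2 using hbad
  -- a step towards the heavy side
  have hstep : ∀ t : ι, ∃ t', T.Adj t t' ∧ ∃ y, wit t ∈ β y ∧ Reach T t t' y := by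
    intro t
    obtain ⟨y, hy⟩ := hbag (wit t)
    have hyt : y ≠ t := fun e => hwit1 t (e ▸ hy)
    obtain ⟨w⟩ := hT.1 t y
    obtain ⟨p, hpath⟩ : ∃ p : T.Walk t y, p.IsPath := ⟨w.toPath, w.toPath.2⟩
    cases p with
    | nil => exact absurd rfl hyt
    | @cons _ u _ h' p' =>
      have htp' : t ∉ p'.support := by
        have := hpath.support_nodup
        rw [Walk.support_cons] at this
        exact (List.nodup_cons.mp this).1
      exact ⟨u, h', y, hy, ⟨p', htp'⟩⟩
  choose nxt hadj hnxt using hstep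
  -- the heavy class sits inside the side towards `nxt t`
  have hHsubX : ∀ t, CC T β t (wit t) ⊆ XX T β t (nxt t) := by
    intro t v hv
    rw [mem_CC] at hv
    obtain ⟨hvβ, x, y, hwx, hvy, hr⟩ := hv
    obtain ⟨y', hy', hr'⟩ := hnxt t
    refine mem_XX.2 ⟨hvβ, y, hvy, ?_⟩
    exact (hr'.trans ((reach_of_bags hsub (hwit1 t) hy' hwx).trans hr))
  have hXbig : ∀ t, 1 / 2 < ∑ v ∈ XX T β t (nxt t), μ v := by
    intro t
    refine lt_of_lt_of_le (hwit2 t) ?_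
    exact Finset.sum_le_sum_of_subset_of_nonneg (hHsubX t) (fun i _ _ => hμ0 i)
  -- the two sides of an edge are disjoint
  have hXdisj : ∀ t t', T.Adj t t' → Disjoint (XX T β t t') (XX T β t' t) := by
    intro t t' h
    rw [Finset.disjoint_left]
    intro v hv1 hv2
    rw [mem_XX] at hv1 hv2
    obtain ⟨hv1β, x, hvx, hr1⟩ := hv1
    obtain ⟨hv2β, x', hvx', hr2⟩ := hv2
    exact not_reach_both hT h (hr1.trans (reach_of_bags hsub hv1β hvx hvx')) hr2
  -- the heavy class of the next node is contained in the current heavy class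
  have hnested : ∀ t, CC T β (nxt t) (wit (nxt t)) ⊆ CC T β t (wit t) := by
    intro t
    set t' := nxt t with ht'
    have hnotX : ∀ v ∈ CC T β t' (wit t'), v ∉ XX T β t' t := by
      by_contra hc
      push_neg at hc
      obtain ⟨v₀, hv₀C, hv₀X⟩ := hc
      have hsubXX : CC T β t' (wit t') ⊆ XX T β t' t := by
        intro w hw
        rw [mem_CC] at hw hv₀C
        rw [mem_XX] at hv₀X
        obtain ⟨hwβ, a, b, hwa, hwb, hr1⟩ := hw
        obtain ⟨hv₀β, c, d, hwc, hvd, hr2⟩ := hv₀C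
        obtain ⟨_, e, hve, hr3⟩ := hv₀X
        refine mem_XX.2 ⟨hwβ, b, hwb, ?_⟩
        have h1 : Reach T t' e d := reach_of_bags hsub hv₀β hve hvd
        have h2 : Reach T t' c a := reach_of_bags hsub (hwit1 t') hwc hwa
        exact hr3.trans (h1.trans (hr2.symm.trans (h2.trans hr1)))
      have hs1 : ∑ v ∈ CC T β t' (wit t'), μ v ≤ ∑ v ∈ XX T β t' t, μ v :=
        Finset.sum_le_sum_of_subset_of_nonneg hsubXX (fun i _ _ => hμ0 i)
      have hs2 := two_sums_le_one hμ0 hμ1 (hXdisj t t' (hadj t))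
      have hs3 := hXbig t
      have hs4 := hwit2 t'
      rw [← ht'] at hs3
      linarith
    intro v hv
    have hvC := hv
    rw [mem_CC] at hv
    obtain ⟨hv1, c, d, hwc, hvd, hr⟩ := hv
    have hvt : v ∉ β t := by
      intro hvt
      exact hnotX v hvC (mem_XX.2 ⟨hv1, t, hvt, reach_refl (by rw [ht']; exact (hadj t).ne)⟩)
    have hdt : d ≠ t := fun e => hvt (e ▸ hvd)
    rcases reach_dichotomy hT (hadj t) hdt with h1 | h1
    · obtain ⟨y', hy', hr'⟩ := hnxt t
      exact mem_CC.2 ⟨hvt, y', d, hy', hvd, hr'.symm.trans h1⟩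
    · exact absurd (mem_XX.2 ⟨hv1, d, hvd, h1⟩) (hnotX v hvC)
  -- iterate the step; since the common element's bag stays on the far side,
  -- distances strictly decrease, a contradiction
  have hne : Nonempty ι := hT.1.nonempty
  set t₀ := Classical.arbitrary ι with ht₀
  set f : ℕ → ι := fun n => nxt^[n] t₀ with hf
  have hfs : ∀ n, f (n + 1) = nxt (f n) := by
    intro n
    simp only [hf, Function.iterate_succ_apply']
  have hcard_anti : ∀ a b, a ≤ b →
      CC T β (f b) (wit (f b)) ⊆ CC T β (f a) (wit (f a)) := by
    intro a b hab
    induction b, hab using Nat.le_induction with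
    | base => exact subset_rfl
    | succ n hn ih =>
      refine subset_trans ?_ ih
      rw [hfs n]
      exact hnested (f n)
  set c : ℕ → ℕ := fun n => (CC T β (f n) (wit (f n))).card with hc
  have hmem : sInf (Set.range c) ∈ Set.range c := Nat.sInf_mem ⟨c 0, 0, rfl⟩
  obtain ⟨N, hN⟩ := hmem
  have heq : ∀ n, N ≤ n → CC T β (f n) (wit (f n)) = CC T β (f N) (wit (f N)) := by
    intro n hn
    refine Finset.eq_of_subset_of_card_le (hcard_anti N n hn) ?_
    rw [show (CC T β (f N) (wit (f N))).card = c N from rfl, hN]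
    exact Nat.sInf_le ⟨n, rfl⟩
  obtain ⟨v₀, hv₀⟩ : (CC T β (f N) (wit (f N))).Nonempty :=
    nonempty_of_sum_pos (lt_trans (by norm_num) (hwit2 (f N)))
  have hvall : ∀ n, N ≤ n → v₀ ∈ CC T β (f n) (wit (f n)) := by
    intro n hn
    rw [heq n hn]
    exact hv₀
  obtain ⟨x₀, hx₀⟩ := hbag v₀
  have hrn : ∀ n, N ≤ n → Reach T (f n) (nxt (f n)) x₀ := by
    intro n hn
    have hv := hvall n hn
    rw [mem_CC] at hv
    obtain ⟨hvβ, c', d, hwc, hvd, hr⟩ := hv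
    obtain ⟨y', hy', hr'⟩ := hnxt (f n)
    have h1 : Reach T (f n) y' c' := reach_of_bags hsub (hwit1 (f n)) hy' hwc
    have h2 : Reach T (f n) d x₀ := reach_of_bags hsub hvβ hvd hx₀
    exact hr'.trans (h1.trans (hr.trans h2))
  have hdec : ∀ n, N ≤ n → T.dist (f (n + 1)) x₀ < T.dist (f n) x₀ := by
    intro n hn
    rw [hfs n]
    exact dist_lt hT (hadj (f n)) (hrn n hn)
  have hmono : ∀ k, T.dist (f (N + k)) x₀ + k ≤ T.dist (f N) x₀ := by
    intro k
    induction k with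
    | zero => simp
    | succ k ih =>
      have h1 := hdec (N + k) (Nat.le_add_right _ _)
      have h2 : N + (k + 1) = (N + k) + 1 := by omega
      rw [h2]
      omega
  have := hmono (T.dist (f N) x₀ + 1)
  omega

end Measure

end StmtAux

open StmtAux

/-- Central bag argument: given `0 < δ ≤ 1/4`, a probability measure `μ` on the
vertices of `G` and a tree decomposition `(T, β)` of `G`, either there is an
anti-adjacent pair of measure `> δ` each, or some bag has measure `≥ 1/2 - δ`. -/
theorem stmt_3 {V : Type*} {ι : Type*} [Fintype V] (G : SimpleGraph V)
    (μ : V → ℝ) (hμ0 : ∀ v, 0 ≤ μ v) (hμ1 : ∑ v, μ v = 1)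
    (δ : ℝ) (hδ0 : 0 < δ) (hδ1 : δ ≤ 1 / 4)
    (T : SimpleGraph ι) (β : ι → Finset V)
    (hT : T.IsTree)
    (hbag : ∀ v : V, ∃ t, v ∈ β t)
    (hsub : ∀ v : V, (T.induce {t | v ∈ β t}).Connected)
    (hedge : ∀ u v : V, G.Adj u v → ∃ t, u ∈ β t ∧ v ∈ β t) :
    (∃ P Q : Finset V, Disjoint P Q ∧ (∀ p ∈ P, ∀ q ∈ Q, ¬ G.Adj p q) ∧
      δ < ∑ v ∈ P, μ v ∧ δ < ∑ v ∈ Q, μ v) ∨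
    (∃ t : ι, 1 / 2 - δ ≤ ∑ v ∈ β t, μ v) := by
  classical
  obtain ⟨t, hgood⟩ := exists_good μ hμ0 hμ1 T β hT hbag hsub
  by_cases hbt : 1 / 2 - δ ≤ ∑ v ∈ β t, μ v
  · exact Or.inr ⟨t, hbt⟩
  left
  push_neg at hbt
  set R : Finset V := Finset.univ \ β t with hRdef
  have hR : ∑ v ∈ R, μ v = 1 - ∑ v ∈ β t, μ v := by
    rw [hRdef, Finset.sum_sdiff_eq_sub (Finset.subset_univ _), hμ1]
  have hRm : 1 / 2 + δ < ∑ v ∈ R, μ v := by rw [hR]; linarith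
  have hmemR : ∀ v, v ∈ R ↔ v ∉ β t := by
    intro v; rw [hRdef]; simp [Finset.mem_sdiff]
  have hCsubR : ∀ v, CC T β t v ⊆ R := by
    intro v w hw
    rw [mem_CC] at hw
    exact (hmemR w).2 hw.1
  have hrefl : ∀ v ∈ R, v ∈ CC T β t v := by
    intro v hv
    obtain ⟨x, hx⟩ := hbag v
    exact mem_CC.2 ⟨(hmemR v).1 hv, x, x, hx, hx,
      reach_refl (fun e => (hmemR v).1 hv (e ▸ hx))⟩
  -- adjacency forces membership in the same class
  have hadjC : ∀ p q, p ∉ β t → q ∉ β t → G.Adj p q → ∀ v, p ∈ CC T β t v →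
      q ∈ CC T β t v := by
    intro p q hp hq hpq v hpC
    rw [mem_CC] at hpC
    obtain ⟨_, a, b, hva, hpb, hr⟩ := hpC
    obtain ⟨x, hpx, hqx⟩ := hedge p q hpq
    exact mem_CC.2 ⟨hq, a, x, hva, hqx, hr.trans (reach_of_bags hsub hp hpb hpx)⟩
  by_cases hbig : ∃ v ∈ R, δ < ∑ w ∈ CC T β t v, μ w
  · obtain ⟨v, hvR, hv⟩ := hbig
    refine ⟨CC T β t v, R \ CC T β t v, Finset.disjoint_sdiff, ?_, hv, ?_⟩
    · intro p hp q hq hpq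
      rw [Finset.mem_sdiff] at hq
      exact hq.2 (hadjC p q ((hmemR p).1 (hCsubR v hp)) ((hmemR q).1 hq.1) hpq v hp)
    · rw [Finset.sum_sdiff_eq_sub (hCsubR v)]
      have := hgood v ((hmemR v).1 hvR)
      linarith
  · push_neg at hbig
    -- all classes are small; take a minimal union of classes of measure > δ
    have hex : ∃ S : Finset V, S ⊆ R ∧ (∀ p ∈ S, CC T β t p ⊆ S) ∧
        δ < ∑ w ∈ S, μ w := ⟨R, subset_rfl, fun p _ => hCsubR p, by linarith⟩
    set 𝒜 : Finset (Finset V) := Finset.univ.filter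
      (fun S => S ⊆ R ∧ (∀ p ∈ S, CC T β t p ⊆ S) ∧ δ < ∑ w ∈ S, μ w) with h𝒜
    have h𝒜ne : 𝒜.Nonempty := by
      obtain ⟨S, h1, h2, h3⟩ := hex
      refine ⟨S, ?_⟩
      rw [h𝒜]
      simp only [Finset.mem_filter, Finset.mem_univ, true_and]
      exact ⟨h1, h2, h3⟩
    obtain ⟨S, hS𝒜, hSmin⟩ := Finset.exists_min_image 𝒜 Finset.card h𝒜ne
    rw [h𝒜, Finset.mem_filter] at hS𝒜
    obtain ⟨-, hSR, hSclosed, hSμ⟩ := hS𝒜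
    obtain ⟨v, hvS⟩ : S.Nonempty := nonempty_of_sum_pos (lt_trans hδ0 hSμ)
    have hvR : v ∈ R := hSR hvS
    -- removing the class of v gives a smaller qualifying set unless measure drops ≤ δ
    have hS' : ∑ w ∈ S \ CC T β t v, μ w ≤ δ := by
      by_contra hgt
      push_neg at hgt
      have hclosed' : ∀ p ∈ S \ CC T β t v, CC T β t p ⊆ S \ CC T β t v := by
        intro p hp q hq
        rw [Finset.mem_sdiff] at hp
        rw [Finset.mem_sdiff]
        refine ⟨hSclosed p hp.1 hq, ?_⟩
        intro hqC
        apply hp.2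
        rw [mem_CC] at hq hqC
        obtain ⟨hqβ, a, b, hpa, hqb, hr1⟩ := hq
        obtain ⟨_, c, d, hvc, hqd, hr2⟩ := hqC
        have hpβ : p ∉ β t := (hmemR p).1 (hSR hp.1)
        exact mem_CC.2 ⟨hpβ, c, a, hvc, hpa,
          (hr2.trans (reach_of_bags hsub hqβ hqd hqb)).trans hr1.symm⟩
      have hmem' : S \ CC T β t v ∈ 𝒜 := by
        rw [h𝒜]
        simp only [Finset.mem_filter, Finset.mem_univ, true_and]
        exact ⟨subset_trans (Finset.sdiff_subset) hSR, hclosed', hgt⟩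
      have hlt : (S \ CC T β t v).card < S.card := by
        refine Finset.card_lt_card ?_
        rw [Finset.ssubset_iff_of_subset (Finset.sdiff_subset)]
        exact ⟨v, hvS, by simp [Finset.mem_sdiff, hrefl v hvR]⟩
      exact absurd (hSmin _ hmem') (by omega)
    have hSsmall : ∑ w ∈ S, μ w ≤ 2 * δ := by
      have h1 : ∑ w ∈ S ∩ CC T β t v, μ w + ∑ w ∈ S \ CC T β t v, μ w
          = ∑ w ∈ S, μ w := Finset.sum_inter_add_sum_sdiff S _ μ
      have h2 : ∑ w ∈ S ∩ CC T β t v, μ w ≤ ∑ w ∈ CC T β t v, μ w :=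
        Finset.sum_le_sum_of_subset_of_nonneg (Finset.inter_subset_right)
          (fun i _ _ => hμ0 i)
      have h3 := hbig v hvR
      linarith
    refine ⟨S, R \ S, Finset.disjoint_sdiff, ?_, hSμ, ?_⟩
    · intro p hp q hq hpq
      rw [Finset.mem_sdiff] at hq
      exact hq.2 (hSclosed p hp (hadjC p q ((hmemR p).1 (hSR hp))
        ((hmemR q).1 hq.1) hpq p (hrefl p ((hSR hp)))))
    · rw [Finset.sum_sdiff_eq_sub hSR]
      linarith
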